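/- The width function of a self-similar hierarchical branching process equals C_{p,γ,ζ}(s) = 1 + Σ_{m=1}^∞ ((sγ/ζ)^m/m!) [∏_{i=1}^m t̂(ζ^{−i}(1−p))] · p/(1 − ζ^{−m}(1−p)), using Σ_{j=1}^∞ λ_j^m p_j = γ^m ζ^{−m} p/(1 − ζ^{−m}(1−p)). -/

import Mathlib

open scoped BigOperators
set_option synthInstance.maxHeartbeats 1000000
set_option maxHeartbeats 1600000

lemma lp_one_summable_norm (x : lp (fun _ : ℕ => ℝ) 1) :
    Summable fun n => ‖x n‖ := by
  have h := lp.memℓp x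
  rw [memℓp_gen_iff (by norm_num : 0 < (1 : ENNReal).toReal)] at h
  simpa using h

lemma lp_one_summable (x : lp (fun _ : ℕ => ℝ) 1) : Summable fun n => x n :=
  (lp_one_summable_norm x).of_norm

lemma lp_one_norm (x : lp (fun _ : ℕ => ℝ) 1) : ‖x‖ = ∑' n, ‖x n‖ := by
  rw [lp.norm_eq_tsum_rpow (by norm_num) x]; simp

noncomputable def sumCLM : lp (fun _ : ℕ => ℝ) 1 →L[ℝ] ℝ :=
  LinearMap.mkContinuous
    { toFun := fun x => ∑' n, x n
      map_add' := fun x y => by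
        simp only [lp.coeFn_add, Pi.add_apply]
        exact Summable.tsum_add (lp_one_summable x) (lp_one_summable y)
      map_smul' := fun c x => by
        simp only [lp.coeFn_smul, Pi.smul_apply, smul_eq_mul, RingHom.id_apply]
        exact tsum_mul_left }
    1 (fun x => by
      rw [one_mul, lp_one_norm]
      exact norm_tsum_le_tsum_norm (lp_one_summable_norm x))

@[simp] lemma sumCLM_apply (x : lp (fun _ : ℕ => ℝ) 1) : sumCLM x = ∑' n, x n := rfl

lemma summable_T_of_le (T : ℕ → ℝ) (hT : ∀ k, 0 ≤ T k) {r R : ℝ} (h0 : 0 ≤ r)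
    (hrR : r ≤ R) (hs : Summable fun k : ℕ => T (k + 1) * R ^ (k + 1)) :
    Summable fun k : ℕ => T (k + 1) * r ^ (k + 1) :=
  Summable.of_nonneg_of_le
    (fun k => mul_nonneg (hT _) (pow_nonneg h0 _))
    (fun k => mul_le_mul_of_nonneg_left (pow_le_pow_left₀ h0 hrR _) (hT _)) hs

/-- Applying `Gop` to a geometric vector multiplies it by `t̂(r)`. -/
lemma G_geom (T : ℕ → ℝ) {c r : ℝ}
    (hs : Summable (fun k : ℕ => T (k + 1) * r ^ (k + 1)))
    (Gop : lp (fun _ : ℕ => ℝ) 1 →L[ℝ] lp (fun _ : ℕ => ℝ) 1)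
    (hG : ∀ (x : lp (fun _ : ℕ => ℝ) 1) (n : ℕ),
      Gop x n = -(x n) + (T 1 + 2) * x (n + 1) +
        ∑' k : ℕ, T (k + 2) * x (n + k + 2))
    (z : lp (fun _ : ℕ => ℝ) 1) (hz : ∀ n, z n = c * r ^ n) (n : ℕ) :
    Gop z n = (c * (-1 + 2 * r + ∑' k : ℕ, T (k + 1) * r ^ (k + 1))) * r ^ n := by
  have htail : ∑' k : ℕ, T (k + 2) * z (n + k + 2)
      = (c * r ^ n) * ((∑' k : ℕ, T (k + 1) * r ^ (k + 1)) - T 1 * r) := by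
    have h1 : ∀ k : ℕ, T (k + 2) * z (n + k + 2)
        = (c * r ^ n) * (T (k + 2) * r ^ (k + 2)) := by
      intro k
      rw [hz, show n + k + 2 = n + (k + 2) from by ring, pow_add]
      ring
    rw [tsum_congr h1, tsum_mul_left]
    congr 1
    have h2 := Summable.tsum_eq_zero_add hs
    simp only [zero_add, pow_one] at h2
    have h3 : ∀ k : ℕ, T (k + 1 + 1) * r ^ (k + 1 + 1) = T (k + 2) * r ^ (k + 2) := by
      intro k; norm_num
    rw [tsum_congr h3] at h2
    rw [h2]; ring
  rw [hG z n, hz, hz, htail, pow_succ]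
  ring

lemma iter_geom (T : ℕ → ℝ) (hT : ∀ k, 0 ≤ T k)
    (p γ ζ : ℝ) (hp : 0 < p) (hp1 : p < 1) (hζ : 1 ≤ ζ)
    (hsum : Summable fun k : ℕ => T (k + 1) * ((1 - p) / ζ) ^ (k + 1))
    (p0 : lp (fun _ : ℕ => ℝ) 1) (hp0 : ∀ n : ℕ, p0 n = p * (1 - p) ^ n)
    (Gop Lam : lp (fun _ : ℕ => ℝ) 1 →L[ℝ] lp (fun _ : ℕ => ℝ) 1)
    (hG : ∀ (x : lp (fun _ : ℕ => ℝ) 1) (n : ℕ),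
      Gop x n = -(x n) + (T 1 + 2) * x (n + 1) +
        ∑' k : ℕ, T (k + 2) * x (n + k + 2))
    (hLam : ∀ (x : lp (fun _ : ℕ => ℝ) 1) (n : ℕ),
      Lam x n = γ / ζ ^ (n + 1) * x n) :
    ∀ m n : ℕ, (((Gop.comp Lam) ^ m) p0) n =
      (p * ∏ i ∈ Finset.range m, ((γ / ζ) *
        (-1 + 2 * ((1 - p) / ζ ^ (i + 1)) +
          ∑' k : ℕ, T (k + 1) * ((1 - p) / ζ ^ (i + 1)) ^ (k + 1)))) *
      ((1 - p) / ζ ^ m) ^ n := by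
  have hζ0 : (0 : ℝ) < ζ := lt_of_lt_of_le one_pos hζ
  have hζne : ζ ≠ 0 := ne_of_gt hζ0
  have h1p : (0 : ℝ) ≤ 1 - p := by linarith
  intro m
  induction m with
  | zero => intro n; simp [hp0]
  | succ m ih =>
    set c : ℝ := p * ∏ i ∈ Finset.range m, ((γ / ζ) *
        (-1 + 2 * ((1 - p) / ζ ^ (i + 1)) +
          ∑' k : ℕ, T (k + 1) * ((1 - p) / ζ ^ (i + 1)) ^ (k + 1))) with hc
    have happ : ((Gop.comp Lam) ^ (m + 1)) p0
        = Gop (Lam (((Gop.comp Lam) ^ m) p0)) := by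
      rw [pow_succ']
      rfl
    set y := ((Gop.comp Lam) ^ m) p0 with hy
    have hz : ∀ n : ℕ, (Lam y) n = (c * (γ / ζ)) * ((1 - p) / ζ ^ (m + 1)) ^ n := by
      intro n
      rw [hLam, ih n,
        show (1 - p) / ζ ^ (m + 1) = ((1 - p) / ζ ^ m) / ζ from by rw [div_div, ← pow_succ],
        div_pow, pow_succ]
      simp only [div_pow]
      field_simp
    have hr'0 : 0 ≤ (1 - p) / ζ ^ (m + 1) :=
      div_nonneg h1p (le_of_lt (pow_pos hζ0 _))
    have hr'le : (1 - p) / ζ ^ (m + 1) ≤ (1 - p) / ζ := by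
      gcongr
      exact le_self_pow₀ hζ (Nat.succ_ne_zero m)
    have hs' : Summable fun k : ℕ => T (k + 1) * ((1 - p) / ζ ^ (m + 1)) ^ (k + 1) :=
      summable_T_of_le T hT hr'0 hr'le hsum
    intro n
    rw [happ, G_geom T hs' Gop hG (Lam y) hz n, Finset.prod_range_succ]
    ring

theorem stmt_13 (T : ℕ → ℝ) (hT : ∀ k, 0 ≤ T k)
    (p γ ζ : ℝ) (hp : 0 < p) (hp1 : p < 1) (hγ : 0 < γ) (hζ : 1 ≤ ζ)
    (hsum : Summable fun k : ℕ => T (k + 1) * ((1 - p) / ζ) ^ (k + 1))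
    (p0 : lp (fun _ : ℕ => ℝ) 1) (hp0 : ∀ n : ℕ, p0 n = p * (1 - p) ^ n)
    (Gop Lam : lp (fun _ : ℕ => ℝ) 1 →L[ℝ] lp (fun _ : ℕ => ℝ) 1)
    (hG : ∀ (x : lp (fun _ : ℕ => ℝ) 1) (n : ℕ),
      Gop x n = -(x n) + (T 1 + 2) * x (n + 1) +
        ∑' k : ℕ, T (k + 2) * x (n + k + 2))
    (hLam : ∀ (x : lp (fun _ : ℕ => ℝ) 1) (n : ℕ),
      Lam x n = γ / ζ ^ (n + 1) * x n) :
    (∀ m : ℕ, 1 ≤ m →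
      ∑' j : ℕ, (γ / ζ ^ (j + 1)) ^ m * (p * (1 - p) ^ j) =
        γ ^ m / ζ ^ m * (p / (1 - (1 - p) / ζ ^ m))) ∧
    (∀ s : ℝ, 0 ≤ s →
      ∑' j : ℕ, (NormedSpace.exp (s • (Gop.comp Lam)) p0) j =
        1 + ∑' m : ℕ,
          ((s * γ / ζ) ^ (m + 1) / (Nat.factorial (m + 1)) *
            (∏ i ∈ Finset.range (m + 1),
              (-1 + 2 * ((1 - p) / ζ ^ (i + 1)) +
                ∑' k : ℕ, T (k + 1) * ((1 - p) / ζ ^ (i + 1)) ^ (k + 1))) *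
            (p / (1 - (1 - p) / ζ ^ (m + 1))))) := by
  have hζ0 : (0 : ℝ) < ζ := lt_of_lt_of_le one_pos hζ
  have hζne : ζ ≠ 0 := ne_of_gt hζ0
  have h1p : (0 : ℝ) ≤ 1 - p := by linarith
  have hr0 : ∀ n : ℕ, 0 ≤ (1 - p) / ζ ^ n := fun n =>
    div_nonneg h1p (le_of_lt (pow_pos hζ0 _))
  have hr1 : ∀ n : ℕ, (1 - p) / ζ ^ n < 1 := by
    intro n
    rw [div_lt_one (pow_pos hζ0 _)]
    have : (1 : ℝ) ≤ ζ ^ n := one_le_pow₀ hζ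
    linarith
  constructor
  · intro m _
    have key : ∀ j : ℕ, (γ / ζ ^ (j + 1)) ^ m * (p * (1 - p) ^ j)
        = (γ ^ m / ζ ^ m * p) * (((1 - p) / ζ ^ m)) ^ j := by
      intro j
      rw [div_pow, div_pow, ← pow_mul, ← pow_mul,
        show (j + 1) * m = m + m * j from by ring, pow_add]
      have h1 : (ζ : ℝ) ^ m ≠ 0 := pow_ne_zero _ hζne
      have h2 : (ζ : ℝ) ^ (m * j) ≠ 0 := pow_ne_zero _ hζne
      field_simp
    rw [tsum_congr key, tsum_mul_left, tsum_geometric_of_lt_one (hr0 m) (hr1 m),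
      mul_assoc, ← div_eq_mul_inv]
  · intro s _
    set A := Gop.comp Lam with hA
    have hiter := iter_geom T hT p γ ζ hp hp1 hζ hsum p0 hp0 Gop Lam hG hLam
    have hexp : NormedSpace.exp (s • A)
        = ∑' n : ℕ, ((s ^ n * ((n.factorial : ℝ))⁻¹) • A ^ n) := by
      simp only [NormedSpace.exp_eq_tsum (𝕂 := ℝ)]
      exact tsum_congr fun n => by rw [smul_pow, smul_smul, mul_comm]
    have hsumop : Summable (fun n : ℕ => (s ^ n * ((n.factorial : ℝ))⁻¹) • A ^ n) := by
      have h := NormedSpace.expSeries_summable' (𝕂 := ℝ) (s • A)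
      exact h.congr fun n => by rw [smul_pow, smul_smul, mul_comm]
    have happly : NormedSpace.exp (s • A) p0
        = ∑' n : ℕ, (s ^ n * ((n.factorial : ℝ))⁻¹) • ((A ^ n) p0) := by
      rw [hexp]
      exact (ContinuousLinearMap.apply ℝ (lp (fun _ : ℕ => ℝ) 1) p0).map_tsum hsumop
    have hsump0 : Summable (fun n : ℕ => (s ^ n * ((n.factorial : ℝ))⁻¹) • ((A ^ n) p0)) := by
      have h := hsumop.map
        (ContinuousLinearMap.apply ℝ (lp (fun _ : ℕ => ℝ) 1) p0).toLinearMap.toAddMonoidHom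
        (ContinuousLinearMap.apply ℝ (lp (fun _ : ℕ => ℝ) 1) p0).continuous
      exact h
    have hSval : ∀ n : ℕ, sumCLM ((A ^ n) p0)
        = (p * ∏ i ∈ Finset.range n, ((γ / ζ) *
            (-1 + 2 * ((1 - p) / ζ ^ (i + 1)) +
              ∑' k : ℕ, T (k + 1) * ((1 - p) / ζ ^ (i + 1)) ^ (k + 1)))) *
          (1 - (1 - p) / ζ ^ n)⁻¹ := by
      intro n
      rw [sumCLM_apply, tsum_congr (hiter n), tsum_mul_left,
        tsum_geometric_of_lt_one (hr0 n) (hr1 n)]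
    set g : ℕ → ℝ := fun n => (s ^ n * ((n.factorial : ℝ))⁻¹) *
        ((p * ∏ i ∈ Finset.range n, ((γ / ζ) *
            (-1 + 2 * ((1 - p) / ζ ^ (i + 1)) +
              ∑' k : ℕ, T (k + 1) * ((1 - p) / ζ ^ (i + 1)) ^ (k + 1)))) *
          (1 - (1 - p) / ζ ^ n)⁻¹) with hg
    have hmain : ∑' j : ℕ, (NormedSpace.exp (s • A) p0) j = ∑' n, g n := by
      rw [← sumCLM_apply, happly, sumCLM.map_tsum hsump0]
      exact tsum_congr fun n => by
        rw [map_smul, smul_eq_mul, hSval n]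
    have hgsum : Summable g := by
      have h := hsump0.map sumCLM.toLinearMap.toAddMonoidHom sumCLM.continuous
      exact h.congr fun n => by
        simp only [Function.comp_apply, LinearMap.toAddMonoidHom_coe,
          ContinuousLinearMap.coe_coe, map_smul, smul_eq_mul]
        rw [hSval n, hg]
    rw [hmain, Summable.tsum_eq_zero_add hgsum]
    have hg0 : g 0 = 1 := by
      rw [hg]
      simp only [pow_zero, Nat.factorial_zero, Nat.cast_one, inv_one, Finset.range_zero,
        Finset.prod_empty, mul_one, one_mul, div_one]
      rw [show (1 : ℝ) - (1 - p) = p from by ring]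
      exact mul_inv_cancel₀ (ne_of_gt hp)
    rw [hg0]
    congr 1
    refine tsum_congr fun m => ?_
    rw [hg]
    simp only
    rw [Finset.prod_mul_distrib, Finset.prod_const, Finset.card_range]
    rw [div_eq_mul_inv (s * γ) ζ, div_eq_mul_inv p, div_eq_mul_inv _ ((Nat.factorial (m+1) : ℝ))]
    push_cast
    ring
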